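/- (Fokker–Planck equation for the Brownian sheet density.) Let g(t,x,y) = (2πtx)^{−1/2} exp(−(y−y₀)²/(2tx)) for t,x > 0, y ∈ ℝ. Then g satisfies the fourth-order PDE ∂²g/∂t∂x = (1/2)·∂²g/∂y² + (tx/4)·∂⁴g/∂y⁴. -/

import Mathlib

private lemma gauss_step (y₀ s : ℝ) (hs : s ≠ 0) (p : ℝ → ℝ) (p' : ℝ) (y : ℝ)
    (hp : HasDerivAt p p' y) :
    HasDerivAt (fun z => p z * Real.exp (-(z - y₀) ^ 2 / (2 * s)))
      ((p' - p y * (y - y₀) / s) * Real.exp (-(y - y₀) ^ 2 / (2 * s))) y := by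
  have h2 : HasDerivAt (fun z : ℝ => -(z - y₀) ^ 2 / (2 * s)) (-(y - y₀) / s) y := by
    have h3 : HasDerivAt (fun z : ℝ => (z - y₀) ^ 2) (2 * (y - y₀)) y := by
      simpa using ((hasDerivAt_id y).sub_const y₀).fun_pow 2
    have h4 := h3.fun_neg.div_const (2 * s)
    refine h4.congr_deriv ?_
    field_simp
  have h5 := hp.fun_mul h2.exp
  refine h5.congr_deriv ?_
  ring

theorem brownian_sheet_density_fokker_planck (y₀ : ℝ)
    (g : ℝ → ℝ → ℝ → ℝ)
    (hg : ∀ t x y, g t x y =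
      (2 * Real.pi * t * x) ^ (-(1:ℝ)/2) * Real.exp (-(y - y₀) ^ 2 / (2 * t * x)))
    (t x : ℝ) (ht : 0 < t) (hx : 0 < x) (y : ℝ) :
    deriv (fun x' => deriv (fun t' => g t' x' y) t) x
      = (1 / 2) * iteratedDeriv 2 (g t x) y
        + (t * x / 4) * iteratedDeriv 4 (g t x) y := by
  have hs : t * x ≠ 0 := by positivity
  set C : ℝ := (2 * Real.pi * t * x) ^ (-(1:ℝ)/2) with hC
  have hfun : g t x = fun z => C * Real.exp (-(z - y₀) ^ 2 / (2 * (t * x))) := by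
    funext z
    rw [hg, mul_assoc 2 t x]
  have hd1 : deriv (g t x)
      = fun z => -C * (z - y₀) / (t * x) * Real.exp (-(z - y₀) ^ 2 / (2 * (t * x))) := by
    funext z
    rw [hfun]
    have h := gauss_step y₀ (t*x) hs (fun _ => C) 0 z (hasDerivAt_const z C)
    have h2 : deriv (fun z => C * Real.exp (-(z - y₀) ^ 2 / (2 * (t * x)))) z
        = (0 - C * (z - y₀) / (t * x)) * Real.exp (-(z - y₀) ^ 2 / (2 * (t * x))) := h.deriv
    rw [h2]; ring
  have hd2 : deriv (fun z => -C * (z - y₀) / (t * x) * Real.exp (-(z - y₀) ^ 2 / (2 * (t * x))))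
      = fun z => C * ((z - y₀) ^ 2 - t * x) / (t * x) ^ 2
          * Real.exp (-(z - y₀) ^ 2 / (2 * (t * x))) := by
    funext z
    have hp : HasDerivAt (fun w => -C * (w - y₀) / (t * x)) (-C * 1 / (t * x)) z :=
      (((hasDerivAt_id z).sub_const y₀).const_mul (-C)).div_const (t * x)
    have h := gauss_step y₀ (t*x) hs (fun w => -C * (w - y₀) / (t * x)) (-C * 1 / (t * x)) z hp
    have h2 : deriv (fun w => -C * (w - y₀) / (t * x) * Real.exp (-(w - y₀) ^ 2 / (2 * (t * x)))) z
        = (-C * 1 / (t * x) - -C * (z - y₀) / (t * x) * (z - y₀) / (t * x))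
            * Real.exp (-(z - y₀) ^ 2 / (2 * (t * x))) := h.deriv
    rw [h2]
    field_simp
    ring
  have hd3 : deriv (fun z => C * ((z - y₀) ^ 2 - t * x) / (t * x) ^ 2
          * Real.exp (-(z - y₀) ^ 2 / (2 * (t * x))))
      = fun z => C * (3 * (t * x) * (z - y₀) - (z - y₀) ^ 3) / (t * x) ^ 3
          * Real.exp (-(z - y₀) ^ 2 / (2 * (t * x))) := by
    funext z
    have h3a : HasDerivAt (fun w : ℝ => (w - y₀) ^ 2) (2 * (z - y₀)) z := by
      simpa using ((hasDerivAt_id z).sub_const y₀).fun_pow 2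
    have hp : HasDerivAt (fun w => C * ((w - y₀) ^ 2 - t * x) / (t * x) ^ 2)
        (C * (2 * (z - y₀)) / (t * x) ^ 2) z :=
      ((h3a.sub_const (t * x)).const_mul C).div_const ((t * x) ^ 2)
    have h := gauss_step y₀ (t*x) hs (fun w => C * ((w - y₀) ^ 2 - t * x) / (t * x) ^ 2)
      (C * (2 * (z - y₀)) / (t * x) ^ 2) z hp
    have h2 : deriv (fun w => C * ((w - y₀) ^ 2 - t * x) / (t * x) ^ 2
          * Real.exp (-(w - y₀) ^ 2 / (2 * (t * x)))) z
        = (C * (2 * (z - y₀)) / (t * x) ^ 2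
            - C * ((z - y₀) ^ 2 - t * x) / (t * x) ^ 2 * (z - y₀) / (t * x))
            * Real.exp (-(z - y₀) ^ 2 / (2 * (t * x))) := h.deriv
    rw [h2]
    field_simp
    ring
  have hd4 : deriv (fun z => C * (3 * (t * x) * (z - y₀) - (z - y₀) ^ 3) / (t * x) ^ 3
          * Real.exp (-(z - y₀) ^ 2 / (2 * (t * x))))
      = fun z => C * ((z - y₀) ^ 4 - 6 * (t * x) * (z - y₀) ^ 2 + 3 * (t * x) ^ 2) / (t * x) ^ 4
          * Real.exp (-(z - y₀) ^ 2 / (2 * (t * x))) := by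
    funext z
    have h4a : HasDerivAt (fun w : ℝ => 3 * (t * x) * (w - y₀)) (3 * (t * x) * 1) z :=
      ((hasDerivAt_id z).sub_const y₀).const_mul (3 * (t * x))
    have h4b : HasDerivAt (fun w : ℝ => (w - y₀) ^ 3) (3 * (z - y₀) ^ 2) z := by
      simpa using ((hasDerivAt_id z).sub_const y₀).fun_pow 3
    have hp : HasDerivAt (fun w => C * (3 * (t * x) * (w - y₀) - (w - y₀) ^ 3) / (t * x) ^ 3)
        (C * (3 * (t * x) * 1 - 3 * (z - y₀) ^ 2) / (t * x) ^ 3) z :=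
      ((h4a.sub h4b).const_mul C).div_const ((t * x) ^ 3)
    have h := gauss_step y₀ (t*x) hs
      (fun w => C * (3 * (t * x) * (w - y₀) - (w - y₀) ^ 3) / (t * x) ^ 3)
      (C * (3 * (t * x) * 1 - 3 * (z - y₀) ^ 2) / (t * x) ^ 3) z hp
    have h2 : deriv (fun w => C * (3 * (t * x) * (w - y₀) - (w - y₀) ^ 3) / (t * x) ^ 3
          * Real.exp (-(w - y₀) ^ 2 / (2 * (t * x)))) z
        = (C * (3 * (t * x) * 1 - 3 * (z - y₀) ^ 2) / (t * x) ^ 3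
            - C * (3 * (t * x) * (z - y₀) - (z - y₀) ^ 3) / (t * x) ^ 3 * (z - y₀) / (t * x))
            * Real.exp (-(z - y₀) ^ 2 / (2 * (t * x))) := h.deriv
    rw [h2]
    field_simp
    ring
  have hiter2 : iteratedDeriv 2 (g t x) y
      = C * ((y - y₀) ^ 2 - t * x) / (t * x) ^ 2 * Real.exp (-(y - y₀) ^ 2 / (2 * (t * x))) := by
    have e2 : iteratedDeriv 2 (g t x) = deriv (deriv (g t x)) := by
      rw [show (2:ℕ) = 1 + 1 from rfl, iteratedDeriv_succ, iteratedDeriv_one]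
    rw [e2, hd1, hd2]
  have hiter4 : iteratedDeriv 4 (g t x) y
      = C * ((y - y₀) ^ 4 - 6 * (t * x) * (y - y₀) ^ 2 + 3 * (t * x) ^ 2) / (t * x) ^ 4
          * Real.exp (-(y - y₀) ^ 2 / (2 * (t * x))) := by
    have e4 : iteratedDeriv 4 (g t x) = deriv (deriv (deriv (deriv (g t x)))) := by
      rw [show (4:ℕ) = 1 + 1 + 1 + 1 from rfl, iteratedDeriv_succ, iteratedDeriv_succ,
        iteratedDeriv_succ, iteratedDeriv_one]
    rw [e4, hd1, hd2, hd3, hd4]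
  -- Left-hand side: the inner t-derivative, for x' near x
  have hDloc : (fun x' => deriv (fun t' => g t' x' y) t) =ᶠ[nhds x]
      (fun x' => (2 * Real.pi * t * x') ^ (-(1:ℝ)/2)
        * (Real.exp (-(y - y₀) ^ 2 / (2 * t * x'))
          * (((y - y₀) ^ 2 - t * x') / (2 * t ^ 2 * x')))) := by
    filter_upwards [eventually_gt_nhds hx] with x' hx'
    have hgfun : (fun t' => g t' x' y)
        = fun t' => (2 * Real.pi * t' * x') ^ (-(1:ℝ)/2)
            * Real.exp (-(y - y₀) ^ 2 / (2 * t' * x')) := funext fun t' => hg t' x' y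
    rw [hgfun]
    have hbpos : (0:ℝ) < 2 * Real.pi * t * x' := by positivity
    have hbase : HasDerivAt (fun t' : ℝ => 2 * Real.pi * t' * x') (2 * Real.pi * x') t := by
      simpa using ((hasDerivAt_id t).const_mul (2 * Real.pi)).mul_const x'
    have hA : HasDerivAt (fun t' : ℝ => (2 * Real.pi * t' * x') ^ (-(1:ℝ)/2))
        ((-(1:ℝ)/2 * (2 * Real.pi * t * x') ^ (-(1:ℝ)/2 - 1)) * (2 * Real.pi * x')) t := by
      have := (Real.hasDerivAt_rpow_const (p := -(1:ℝ)/2) (Or.inl (ne_of_gt hbpos))).comp t hbase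
      exact this
    have hb2 : HasDerivAt (fun t' : ℝ => 2 * t' * x') (2 * x') t := by
      simpa using ((hasDerivAt_id t).const_mul 2).mul_const x'
    have h6 : HasDerivAt (fun t' : ℝ => -(y - y₀) ^ 2 / (2 * t' * x'))
        (-(y - y₀) ^ 2 * (-(2 * x') / (2 * t * x') ^ 2)) t :=
      (hb2.inv (by positivity)).const_mul (-(y - y₀) ^ 2)
    have hAB := hA.mul h6.exp
    have h2 : deriv (fun t' => (2 * Real.pi * t' * x') ^ (-(1:ℝ)/2)
          * Real.exp (-(y - y₀) ^ 2 / (2 * t' * x'))) t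
        = (-(1:ℝ)/2 * (2 * Real.pi * t * x') ^ (-(1:ℝ)/2 - 1)) * (2 * Real.pi * x')
            * Real.exp (-(y - y₀) ^ 2 / (2 * t * x'))
          + (2 * Real.pi * t * x') ^ (-(1:ℝ)/2)
            * (Real.exp (-(y - y₀) ^ 2 / (2 * t * x'))
              * (-(y - y₀) ^ 2 * (-(2 * x') / (2 * t * x') ^ 2))) := hAB.deriv
    rw [h2, Real.rpow_sub hbpos, Real.rpow_one]
    field_simp
    ring
  have hout : deriv (fun x' => deriv (fun t' => g t' x' y) t) x
      = deriv (fun x' => (2 * Real.pi * t * x') ^ (-(1:ℝ)/2)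
          * (Real.exp (-(y - y₀) ^ 2 / (2 * t * x'))
            * (((y - y₀) ^ 2 - t * x') / (2 * t ^ 2 * x')))) x := hDloc.deriv_eq
  -- now differentiate D in x'
  have hbpos0 : (0:ℝ) < 2 * Real.pi * t * x := by positivity
  have hbase2 : HasDerivAt (fun x' : ℝ => 2 * Real.pi * t * x') (2 * Real.pi * t) x := by
    simpa using (hasDerivAt_id x).const_mul (2 * Real.pi * t)
  have hA2 : HasDerivAt (fun x' : ℝ => (2 * Real.pi * t * x') ^ (-(1:ℝ)/2))
      ((-(1:ℝ)/2 * (2 * Real.pi * t * x) ^ (-(1:ℝ)/2 - 1)) * (2 * Real.pi * t)) x :=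
    (Real.hasDerivAt_rpow_const (Or.inl (ne_of_gt hbpos0))).comp x hbase2
  have hb3 : HasDerivAt (fun x' : ℝ => 2 * t * x') (2 * t) x := by
    simpa using (hasDerivAt_id x).const_mul (2 * t)
  have h7 : HasDerivAt (fun x' : ℝ => -(y - y₀) ^ 2 / (2 * t * x'))
      (-(y - y₀) ^ 2 * (-(2 * t) / (2 * t * x) ^ 2)) x :=
    (hb3.inv (by positivity)).const_mul (-(y - y₀) ^ 2)
  have hCnum : HasDerivAt (fun x' : ℝ => (y - y₀) ^ 2 - t * x') (-(t * 1)) x :=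
    ((hasDerivAt_id x).const_mul t).const_sub ((y - y₀) ^ 2)
  have hden : HasDerivAt (fun x' : ℝ => 2 * t ^ 2 * x') (2 * t ^ 2 * 1) x :=
    (hasDerivAt_id x).const_mul (2 * t ^ 2)
  have hCfrac : HasDerivAt (fun x' : ℝ => ((y - y₀) ^ 2 - t * x') / (2 * t ^ 2 * x'))
      ((-(t * 1) * (2 * t ^ 2 * x) - ((y - y₀) ^ 2 - t * x) * (2 * t ^ 2 * 1))
        / (2 * t ^ 2 * x) ^ 2) x :=
    hCnum.div hden (by positivity)
  have hD := hA2.mul (h7.exp.mul hCfrac)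
  have hDval : deriv (fun x' => (2 * Real.pi * t * x') ^ (-(1:ℝ)/2)
        * (Real.exp (-(y - y₀) ^ 2 / (2 * t * x'))
          * (((y - y₀) ^ 2 - t * x') / (2 * t ^ 2 * x')))) x
      = (-(1:ℝ)/2 * (2 * Real.pi * t * x) ^ (-(1:ℝ)/2 - 1)) * (2 * Real.pi * t)
          * (Real.exp (-(y - y₀) ^ 2 / (2 * t * x))
            * (((y - y₀) ^ 2 - t * x) / (2 * t ^ 2 * x)))
        + (2 * Real.pi * t * x) ^ (-(1:ℝ)/2)
          * (Real.exp (-(y - y₀) ^ 2 / (2 * t * x))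
              * (-(y - y₀) ^ 2 * (-(2 * t) / (2 * t * x) ^ 2))
              * (((y - y₀) ^ 2 - t * x) / (2 * t ^ 2 * x))
            + Real.exp (-(y - y₀) ^ 2 / (2 * t * x))
              * ((-(t * 1) * (2 * t ^ 2 * x) - ((y - y₀) ^ 2 - t * x) * (2 * t ^ 2 * 1))
                / (2 * t ^ 2 * x) ^ 2)) := hD.deriv
  rw [hout, hDval, hiter2, hiter4, Real.rpow_sub hbpos0, Real.rpow_one, ← hC,
    show (2:ℝ) * (t * x) = 2 * t * x from by ring]
  field_simp
  ring
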